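/- arXiv:2411.04239 — 4 statements merged into one kernel-verified Lean document; each statement's English description precedes it below -/
import Mathlib

section
/- Let C₁ and C₂ be nonempty closed convex sets in ℝ^k with Hausdorff distance d_H(C₁, C₂) = ε < ∞. Then for every x ∈ ℝ^k, ‖Π_{C₁} x - Π_{C₂} x‖ ≤ 3ε + 2√(ε · ‖x - Π_{C₁} x‖). -/
/-- If `C₁, C₂ ⊆ ℝ^k` are nonempty closed convex sets with finite Hausdorff distance
`ε = d_H(C₁, C₂)`, then for every `x`,
`‖Π_{C₁} x - Π_{C₂} x‖ ≤ 3ε + 2√(ε ‖x - Π_{C₁} x‖)`. -/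
theorem projection_hausdorff_estimate {k : ℕ}
    (C₁ C₂ : Set (EuclideanSpace ℝ (Fin k)))
    (h₁ne : C₁.Nonempty) (h₂ne : C₂.Nonempty)
    (h₁cl : IsClosed C₁) (h₂cl : IsClosed C₂)
    (h₁conv : Convex ℝ C₁) (h₂conv : Convex ℝ C₂)
    (hfin : EMetric.hausdorffEdist C₁ C₂ ≠ ⊤)
    (ε : ℝ) (hε : ε = Metric.hausdorffDist C₁ C₂)
    (proj₁ proj₂ : EuclideanSpace ℝ (Fin k) → EuclideanSpace ℝ (Fin k))
    (hproj₁_mem : ∀ x, proj₁ x ∈ C₁)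
    (hproj₁_min : ∀ x, ∀ y ∈ C₁, dist x (proj₁ x) ≤ dist x y)
    (hproj₂_mem : ∀ x, proj₂ x ∈ C₂)
    (hproj₂_min : ∀ x, ∀ y ∈ C₂, dist x (proj₂ x) ≤ dist x y)
    (x : EuclideanSpace ℝ (Fin k)) :
    ‖proj₁ x - proj₂ x‖ ≤ 3 * ε + 2 * Real.sqrt (ε * ‖x - proj₁ x‖) := by
  set p₁ := proj₁ x with hp₁
  set p₂ := proj₂ x with hp₂
  have hε0 : 0 ≤ ε := hε ▸ Metric.hausdorffDist_nonneg
  -- find q₂ ∈ C₂ close to p₁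
  obtain ⟨q₂, hq₂mem, hq₂d⟩ := h₂cl.exists_infDist_eq_dist h₂ne p₁
  have hq₂ : dist p₁ q₂ ≤ ε := by
    rw [← hq₂d, hε]
    exact Metric.infDist_le_hausdorffDist_of_mem (hproj₁_mem x) hfin
  -- find q₁ ∈ C₁ close to p₂
  obtain ⟨q₁, hq₁mem, hq₁d⟩ := h₁cl.exists_infDist_eq_dist h₁ne p₂
  have hq₁ : dist p₂ q₁ ≤ ε := by
    rw [← hq₁d, hε, Metric.hausdorffDist_comm]
    exact Metric.infDist_le_hausdorffDist_of_mem (hproj₂_mem x)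
      (by rwa [EMetric.hausdorffEdist_comm])
  set d := ‖x - p₁‖ with hd
  have hd' : dist x p₁ = d := dist_eq_norm x p₁
  have hd0 : 0 ≤ d := norm_nonneg _
  -- dist x p₂ ≤ d + ε
  have hxp₂ : dist x p₂ ≤ d + ε := by
    calc dist x p₂ ≤ dist x q₂ := hproj₂_min x q₂ hq₂mem
      _ ≤ dist x p₁ + dist p₁ q₂ := dist_triangle _ _ _
      _ ≤ d + ε := by rw [hd']; linarith
  have hxq₁ : dist x q₁ ≤ d + 2 * ε := by
    calc dist x q₁ ≤ dist x p₂ + dist p₂ q₁ := dist_triangle _ _ _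
      _ ≤ d + 2 * ε := by linarith
  -- obtuse angle at p₁
  haveI : Nonempty ↑C₁ := ⟨⟨p₁, hproj₁_mem x⟩⟩
  have hinf : ‖x - p₁‖ = ⨅ w : C₁, ‖x - w‖ := by
    refine le_antisymm (le_ciInf fun w => ?_) (ciInf_le ⟨0, fun r ⟨w, hw⟩ => hw ▸ norm_nonneg _⟩
      (⟨p₁, hproj₁_mem x⟩ : C₁))
    rw [← dist_eq_norm, ← dist_eq_norm]
    exact hproj₁_min x w w.2
  have hobtuse : ∀ w ∈ C₁, @inner ℝ _ _ (x - p₁) (w - p₁) ≤ 0 :=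
    (norm_eq_iInf_iff_real_inner_le_zero h₁conv (hproj₁_mem x)).mp hinf
  have hob := hobtuse q₁ hq₁mem
  -- key quadratic bound
  have hexp : ‖x - q₁‖ ^ 2 = ‖x - p₁‖ ^ 2 - 2 * @inner ℝ _ _ (x - p₁) (q₁ - p₁)
      + ‖q₁ - p₁‖ ^ 2 := by
    have : x - q₁ = (x - p₁) - (q₁ - p₁) := by abel
    rw [this, @norm_sub_sq_real]
    try ring
  have hkey : ‖q₁ - p₁‖ ^ 2 ≤ ‖x - q₁‖ ^ 2 - d ^ 2 := by
    rw [hexp]; simp only [← hd]; nlinarith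
  have hxq₁' : ‖x - q₁‖ ≤ d + 2 * ε := by rw [← dist_eq_norm]; exact hxq₁
  have hxq₁0 : 0 ≤ ‖x - q₁‖ := norm_nonneg _
  have hsq : ‖q₁ - p₁‖ ^ 2 ≤ 4 * ε ^ 2 + 4 * ε * d := by nlinarith
  set s := Real.sqrt (ε * d) with hs
  have hs0 : 0 ≤ s := Real.sqrt_nonneg _
  have hs2 : s ^ 2 = ε * d := Real.sq_sqrt (mul_nonneg hε0 hd0)
  have hq₁p₁ : ‖q₁ - p₁‖ ≤ 2 * ε + 2 * s := by
    nlinarith [norm_nonneg (q₁ - p₁), sq_nonneg (‖q₁ - p₁‖ - (2 * ε + 2 * s))]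
  calc ‖p₁ - p₂‖ ≤ ‖p₁ - q₁‖ + ‖q₁ - p₂‖ := norm_sub_le_norm_sub_add_norm_sub _ _ _
    _ ≤ (2 * ε + 2 * s) + ε := by
        have h1 : ‖p₁ - q₁‖ = ‖q₁ - p₁‖ := norm_sub_rev _ _
        have h2 : ‖q₁ - p₂‖ = dist p₂ q₁ := by rw [norm_sub_rev, dist_eq_norm]
        linarith
    _ = 3 * ε + 2 * s := by ring
end

section
/- Let μ and ν be probability measures on a measurable space and let n ∈ ℕ. Then the total variation distance between the product measures satisfies ‖μ^n − ν^n‖_TV ≤ n · ‖μ − ν‖_TV. -/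
open MeasureTheory

/-- Total variation distance between two measures:
`‖μ − ν‖_TV = sup over measurable sets B of |μ(B) − ν(B)|`. -/
noncomputable def tvDist {α : Type*} [MeasurableSpace α] (μ ν : Measure α) : ℝ :=
  ⨆ s : {s : Set α // MeasurableSet s}, |(μ s.1).toReal - (ν s.1).toReal|

section Aux

open ENNReal

variable {α : Type*} [MeasurableSpace α]

lemma tvDist_bddAbove (μ ν : Measure α) [IsProbabilityMeasure μ] [IsProbabilityMeasure ν] :
    BddAbove (Set.range fun s : {s : Set α // MeasurableSet s} =>
      |(μ s.1).toReal - (ν s.1).toReal|) := by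
  refine ⟨1, ?_⟩
  rintro x ⟨s, rfl⟩
  have h1 : (μ s.1).toReal ≤ 1 := by
    simpa using ENNReal.toReal_mono (by simp) (prob_le_one (μ := μ) (s := s.1))
  have h2 : (ν s.1).toReal ≤ 1 := by
    simpa using ENNReal.toReal_mono (by simp) (prob_le_one (μ := ν) (s := s.1))
  have h3 : (0:ℝ) ≤ (μ s.1).toReal := ENNReal.toReal_nonneg
  have h4 : (0:ℝ) ≤ (ν s.1).toReal := ENNReal.toReal_nonneg
  rw [abs_sub_le_iff]
  constructor <;> linarith

lemma abs_le_tvDist (μ ν : Measure α) [IsProbabilityMeasure μ] [IsProbabilityMeasure ν]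
    {s : Set α} (hs : MeasurableSet s) :
    |(μ s).toReal - (ν s).toReal| ≤ tvDist μ ν :=
  le_ciSup (tvDist_bddAbove μ ν) (⟨s, hs⟩ : {s : Set α // MeasurableSet s})

lemma tvDist_nonneg (μ ν : Measure α) [IsProbabilityMeasure μ] [IsProbabilityMeasure ν] :
    0 ≤ tvDist μ ν := by
  have := abs_le_tvDist μ ν MeasurableSet.empty
  simpa using le_trans (abs_nonneg _) this

lemma tvDist_comm (μ ν : Measure α) : tvDist μ ν = tvDist ν μ := by
  unfold tvDist
  congr 1
  funext s
  rw [abs_sub_comm]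

/-- Key lemma: integrals of `[0,1]`-valued functions differ by at most the TV distance. -/
lemma lintegral_le_lintegral_add_tvDist (μ ν : Measure α)
    [IsProbabilityMeasure μ] [IsProbabilityMeasure ν]
    {f : α → ℝ≥0∞} (hf : Measurable f) (hf1 : ∀ x, f x ≤ 1) :
    ∫⁻ x, f x ∂μ ≤ ∫⁻ x, f x ∂ν + ENNReal.ofReal (tvDist μ ν) := by
  obtain ⟨P, hP, h1, h2⟩ := hahn_decomposition (μ := μ) (ν := ν)
  -- restricted measure inequalities
  have hPc : μ.restrict Pᶜ ≤ ν.restrict Pᶜ := by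
    refine Measure.le_iff.2 fun t ht => ?_
    rw [Measure.restrict_apply ht, Measure.restrict_apply ht]
    exact h2 _ (ht.inter hP.compl) Set.inter_subset_right
  have hPm : ν.restrict P ≤ μ.restrict P := by
    refine Measure.le_iff.2 fun t ht => ?_
    rw [Measure.restrict_apply ht, Measure.restrict_apply ht]
    exact h1 _ (ht.inter hP) Set.inter_subset_right
  have hνP : ν P ≤ μ P := h1 P hP le_rfl
  -- decompose the integrals
  have hμdec : ∫⁻ x, f x ∂μ = ∫⁻ x in P, f x ∂μ + ∫⁻ x in Pᶜ, f x ∂μ :=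
    (lintegral_add_compl f hP).symm
  have hνdec : ∫⁻ x, f x ∂ν = ∫⁻ x in P, f x ∂ν + ∫⁻ x in Pᶜ, f x ∂ν :=
    (lintegral_add_compl f hP).symm
  have hcompl : ∫⁻ x in Pᶜ, f x ∂μ ≤ ∫⁻ x in Pᶜ, f x ∂ν := lintegral_mono' hPc le_rfl
  -- on P : additive inequality
  have hsum : ∀ (ρ : Measure α) [IsProbabilityMeasure ρ],
      ∫⁻ x in P, f x ∂ρ + ∫⁻ x in P, (1 - f x) ∂ρ = ρ P := by
    intro ρ _
    rw [← lintegral_add_left hf]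
    have : ∀ x, f x + (1 - f x) = 1 := fun x => add_tsub_cancel_of_le (hf1 x)
    simp only [this]
    rw [setLIntegral_one]
  have h1f : ∫⁻ x in P, (1 - f x) ∂ν ≤ ∫⁻ x in P, (1 - f x) ∂μ := lintegral_mono' hPm le_rfl
  have hadd : ∫⁻ x in P, f x ∂μ + ν P ≤ ∫⁻ x in P, f x ∂ν + μ P := by
    rw [← hsum ν, ← hsum μ]
    calc ∫⁻ x in P, f x ∂μ + (∫⁻ x in P, f x ∂ν + ∫⁻ x in P, (1 - f x) ∂ν)
        ≤ ∫⁻ x in P, f x ∂μ + (∫⁻ x in P, f x ∂ν + ∫⁻ x in P, (1 - f x) ∂μ) := by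
          gcongr
      _ = ∫⁻ x in P, f x ∂ν + (∫⁻ x in P, f x ∂μ + ∫⁻ x in P, (1 - f x) ∂μ) := by ring
  -- μ P - ν P ≤ ofReal tvDist
  have hdiff : μ P ≤ ν P + ENNReal.ofReal (tvDist μ ν) := by
    have habs : (μ P).toReal - (ν P).toReal ≤ tvDist μ ν :=
      le_trans (le_abs_self _) (abs_le_tvDist μ ν hP)
    have hμPfin : μ P ≠ ∞ := measure_ne_top _ _
    have hνPfin : ν P ≠ ∞ := measure_ne_top _ _
    have : μ P - ν P ≤ ENNReal.ofReal (tvDist μ ν) := by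
      rw [ENNReal.le_ofReal_iff_toReal_le (by simp [hμPfin, hνPfin])
        (tvDist_nonneg μ ν), ENNReal.toReal_sub_of_le hνP hμPfin]
      exact habs
    calc μ P ≤ ν P + (μ P - ν P) := le_add_tsub
      _ ≤ ν P + ENNReal.ofReal (tvDist μ ν) := by gcongr
  -- combine
  have hPle : ∫⁻ x in P, f x ∂μ ≤ ∫⁻ x in P, f x ∂ν + ENNReal.ofReal (tvDist μ ν) := by
    have hνPfin : ν P ≠ ∞ := measure_ne_top _ _
    rw [← ENNReal.add_le_add_iff_right hνPfin]
    calc ∫⁻ x in P, f x ∂μ + ν P ≤ ∫⁻ x in P, f x ∂ν + μ P := hadd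
      _ ≤ ∫⁻ x in P, f x ∂ν + (ν P + ENNReal.ofReal (tvDist μ ν)) := by gcongr
      _ = ∫⁻ x in P, f x ∂ν + ENNReal.ofReal (tvDist μ ν) + ν P := by ring
  rw [hμdec, hνdec]
  calc ∫⁻ x in P, f x ∂μ + ∫⁻ x in Pᶜ, f x ∂μ
      ≤ (∫⁻ x in P, f x ∂ν + ENNReal.ofReal (tvDist μ ν)) + ∫⁻ x in Pᶜ, f x ∂ν :=
        add_le_add hPle hcompl
    _ = ∫⁻ x in P, f x ∂ν + ∫⁻ x in Pᶜ, f x ∂ν + ENNReal.ofReal (tvDist μ ν) := by ring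

lemma prod_fst_le {β : Type*} [MeasurableSpace β]
    (μ ν : Measure α) [IsProbabilityMeasure μ] [IsProbabilityMeasure ν]
    (ρ : Measure β) [IsProbabilityMeasure ρ] {A : Set (α × β)} (hA : MeasurableSet A) :
    (μ.prod ρ) A ≤ (ν.prod ρ) A + ENNReal.ofReal (tvDist μ ν) := by
  rw [Measure.prod_apply hA, Measure.prod_apply hA]
  exact lintegral_le_lintegral_add_tvDist μ ν (measurable_measure_prodMk_left hA)
    (fun x => prob_le_one)

lemma prod_snd_le {β : Type*} [MeasurableSpace β]
    (ν : Measure α) [IsProbabilityMeasure ν] (ρ₁ ρ₂ : Measure β) [SFinite ρ₁] [SFinite ρ₂]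
    (c : ℝ≥0∞) (h : ∀ t : Set β, MeasurableSet t → ρ₁ t ≤ ρ₂ t + c)
    {A : Set (α × β)} (hA : MeasurableSet A) :
    (ν.prod ρ₁) A ≤ (ν.prod ρ₂) A + c := by
  rw [Measure.prod_apply hA, Measure.prod_apply hA]
  calc ∫⁻ x, ρ₁ (Prod.mk x ⁻¹' A) ∂ν ≤ ∫⁻ x, (ρ₂ (Prod.mk x ⁻¹' A) + c) ∂ν :=
        lintegral_mono fun x => h _ (hA.preimage measurable_prodMk_left)
    _ = ∫⁻ x, ρ₂ (Prod.mk x ⁻¹' A) ∂ν + c := by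
        rw [lintegral_add_right _ measurable_const, lintegral_const, measure_univ, mul_one]

lemma pi_le_pi_add (μ ν : Measure α) [IsProbabilityMeasure μ] [IsProbabilityMeasure ν] :
    ∀ (n : ℕ) (B : Set (Fin n → α)), MeasurableSet B →
      Measure.pi (fun _ : Fin n => μ) B ≤
        Measure.pi (fun _ : Fin n => ν) B + n * ENNReal.ofReal (tvDist μ ν) := by
  intro n
  induction n with
  | zero =>
    intro B hB
    rw [Measure.pi_of_empty (fun _ : Fin 0 => μ), Measure.pi_of_empty (fun _ : Fin 0 => ν)]
    exact le_self_add
  | succ n ih =>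
    intro B hB
    set e := MeasurableEquiv.piFinSuccAbove (fun _ : Fin (n + 1) => α) 0 with he
    have hμ := (MeasureTheory.measurePreserving_piFinSuccAbove
      (fun _ : Fin (n + 1) => μ) 0).symm e
    have hν := (MeasureTheory.measurePreserving_piFinSuccAbove
      (fun _ : Fin (n + 1) => ν) 0).symm e
    have hA : MeasurableSet (e.symm ⁻¹' B) := e.symm.measurable hB
    have hμeq : (μ.prod (Measure.pi fun _ : Fin n => μ)) (e.symm ⁻¹' B) =
        Measure.pi (fun _ : Fin (n + 1) => μ) B := hμ.measure_preimage hB.nullMeasurableSet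
    have hνeq : (ν.prod (Measure.pi fun _ : Fin n => ν)) (e.symm ⁻¹' B) =
        Measure.pi (fun _ : Fin (n + 1) => ν) B := hν.measure_preimage hB.nullMeasurableSet
    rw [← hμeq, ← hνeq]
    calc (μ.prod (Measure.pi fun _ : Fin n => μ)) (e.symm ⁻¹' B)
        ≤ (ν.prod (Measure.pi fun _ : Fin n => μ)) (e.symm ⁻¹' B)
            + ENNReal.ofReal (tvDist μ ν) := prod_fst_le μ ν _ hA
      _ ≤ ((ν.prod (Measure.pi fun _ : Fin n => ν)) (e.symm ⁻¹' B)
            + n * ENNReal.ofReal (tvDist μ ν)) + ENNReal.ofReal (tvDist μ ν) := by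
          gcongr
          exact prod_snd_le ν _ _ _ (fun t ht => ih t ht) hA
      _ = (ν.prod (Measure.pi fun _ : Fin n => ν)) (e.symm ⁻¹' B)
            + ((n + 1 : ℕ) : ENNReal) * ENNReal.ofReal (tvDist μ ν) := by push_cast; ring
    -- cast (↑(n+1)) = ↑n + 1 handled below if needed

end Aux

/-- For probability measures `μ, ν`, the total variation distance between the `n`-fold
product measures satisfies `‖μ^n − ν^n‖_TV ≤ n ‖μ − ν‖_TV`. -/
theorem tvDist_pi_le {α : Type*} [MeasurableSpace α] (μ ν : Measure α)
    [IsProbabilityMeasure μ] [IsProbabilityMeasure ν] (n : ℕ) :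
    tvDist (Measure.pi fun _ : Fin n => μ) (Measure.pi fun _ : Fin n => ν) ≤
      n * tvDist μ ν := by
  set πμ := Measure.pi fun _ : Fin n => μ
  set πν := Measure.pi fun _ : Fin n => ν
  refine ciSup_le fun ⟨B, hB⟩ => ?_
  have key : ∀ (ρ₁ ρ₂ : Measure α) (_ : IsProbabilityMeasure ρ₁) (_ : IsProbabilityMeasure ρ₂),
      ((Measure.pi fun _ : Fin n => ρ₁) B).toReal - ((Measure.pi fun _ : Fin n => ρ₂) B).toReal
        ≤ n * tvDist ρ₁ ρ₂ := by
    intro ρ₁ ρ₂ h₁ h₂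
    have hle := pi_le_pi_add ρ₁ ρ₂ n B hB
    have hfin : (Measure.pi fun _ : Fin n => ρ₂) B + n * ENNReal.ofReal (tvDist ρ₁ ρ₂) ≠ ⊤ := by
      simp [measure_ne_top, ENNReal.mul_ne_top, ENNReal.natCast_ne_top]
    have := ENNReal.toReal_mono hfin hle
    rw [ENNReal.toReal_add (measure_ne_top _ _) (by simp [ENNReal.mul_ne_top]),
      ENNReal.toReal_mul, ENNReal.toReal_natCast,
      ENNReal.toReal_ofReal (tvDist_nonneg ρ₁ ρ₂)] at this
    linarith
  rw [abs_sub_le_iff]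
  refine ⟨key μ ν inferInstance inferInstance, ?_⟩
  have := key ν μ inferInstance inferInstance
  rwa [tvDist_comm ν μ] at this
end

section
/- Let W₁ and W₂ be measurable spaces. Suppose Γ₁ is a convex set of probability measures on W₁ and, for each w₁ ∈ W₁, Γ(w₁) is a convex set of probability measures on W₂, with the families measurable enough that disintegrated measures are well-defined. Then the set Γ of probability measures γ on W₁ × W₂ whose W₁-marginal lies in Γ₁ and whose conditional distributions γ_{W₂|w₁} lie in Γ(w₁) for (marginal-)almost every w₁ is convex. -/
open MeasureTheory ProbabilityTheory
open scoped ENNReal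

lemma compProd_withDensity_fst {W₁ W₂ : Type*} [MeasurableSpace W₁] [MeasurableSpace W₂]
    (μ : Measure W₁) [IsFiniteMeasure μ] (κ : Kernel W₁ W₂) [IsFiniteKernel κ]
    {f : W₁ → ℝ≥0∞} (hf : Measurable f) (hf1 : ∀ w, f w ≤ 1) :
    μ.compProd (κ.withDensity (fun w _ => f w)) = (μ.withDensity f).compProd κ := by
  haveI : IsFiniteKernel (κ.withDensity fun w _ => f w) :=
    Kernel.isFiniteKernel_withDensity_of_bounded κ (B := 1) ENNReal.one_ne_top (fun a _ => hf1 a)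
  haveI : IsFiniteMeasure (μ.withDensity f) := by
    refine isFiniteMeasure_withDensity (ne_top_of_le_ne_top (measure_ne_top μ Set.univ) ?_)
    calc ∫⁻ a, f a ∂μ ≤ ∫⁻ _, 1 ∂μ := lintegral_mono hf1
    _ = μ Set.univ := by simp
  ext s hs
  rw [Measure.compProd_apply hs, Measure.compProd_apply hs,
    lintegral_withDensity_eq_lintegral_mul _ hf (Kernel.measurable_kernel_prodMk_left hs)]
  congr 1
  ext w
  rw [Kernel.withDensity_apply _ (show Measurable (Function.uncurry fun w (_ : W₂) => f w) from hf.comp measurable_fst), withDensity_const,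
    Measure.smul_apply]
  rfl

/-- Convexity of a set of measures on a product space defined by disintegration: if the
set `Γ₁` of admissible `W₁`-marginals is convex, and for each `w₁` the set `Γfam w₁` of
admissible conditional distributions on `W₂` is convex, then the set `Γ` of joint
probability measures `γ = γ₁ ⊗ₘ κ` with marginal `γ₁ ∈ Γ₁` and conditionals
`κ w₁ ∈ Γfam w₁` (marginal-a.e.) is convex. -/
theorem disintegration_set_convex {W₁ W₂ : Type*} [MeasurableSpace W₁] [MeasurableSpace W₂]
    (Γ₁ : Set (Measure W₁)) (Γfam : W₁ → Set (Measure W₂))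
    (hΓ₁prob : ∀ γ₁ ∈ Γ₁, IsProbabilityMeasure γ₁)
    (hΓ₁conv : ∀ γ₁ ∈ Γ₁, ∀ γ₂ ∈ Γ₁, ∀ a b : ℝ≥0∞, a + b = 1 → a • γ₁ + b • γ₂ ∈ Γ₁)
    (hΓfamconv : ∀ w₁ : W₁, ∀ ν₁ ∈ Γfam w₁, ∀ ν₂ ∈ Γfam w₁,
      ∀ a b : ℝ≥0∞, a + b = 1 → a • ν₁ + b • ν₂ ∈ Γfam w₁)
    (Γ : Set (Measure (W₁ × W₂)))
    (hΓ : Γ = {γ | ∃ γ₁ ∈ Γ₁, ∃ κ : Kernel W₁ W₂, IsMarkovKernel κ ∧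
      (∀ᵐ w₁ ∂γ₁, κ w₁ ∈ Γfam w₁) ∧ γ = γ₁.compProd κ}) :
    ∀ γa ∈ Γ, ∀ γb ∈ Γ, ∀ a b : ℝ≥0∞, a + b = 1 → a • γa + b • γb ∈ Γ := by
  subst hΓ
  rintro γa ⟨γ₁, hγ₁, κ, hκM, hκae, rfl⟩ γb ⟨γ₂, hγ₂, η, hηM, hηae, rfl⟩ a b hab
  haveI := hΓ₁prob γ₁ hγ₁
  haveI := hΓ₁prob γ₂ hγ₂
  have ha1 : a ≤ 1 := hab.le.trans' le_self_add
  have hb1 : b ≤ 1 := hab.le.trans' le_add_self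
  set μ : Measure W₁ := a • γ₁ + b • γ₂ with hμdef
  haveI hfin1 : IsFiniteMeasure (a • γ₁) := by
    constructor
    rw [Measure.smul_apply, measure_univ, smul_eq_mul, mul_one]
    exact ha1.trans_lt ENNReal.one_lt_top
  haveI hfin2 : IsFiniteMeasure (b • γ₂) := by
    constructor
    rw [Measure.smul_apply, measure_univ, smul_eq_mul, mul_one]
    exact hb1.trans_lt ENNReal.one_lt_top
  haveI : IsFiniteMeasure μ := by rw [hμdef]; infer_instance
  set f : W₁ → ℝ≥0∞ := (a • γ₁).rnDeriv μ with hfdef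
  set g : W₁ → ℝ≥0∞ := (b • γ₂).rnDeriv μ with hgdef
  have hfm : Measurable f := Measure.measurable_rnDeriv _ _
  have hgm : Measurable g := Measure.measurable_rnDeriv _ _
  have hle1 : a • γ₁ ≤ μ := by rw [hμdef]; exact Measure.le_add_right le_rfl
  have hle2 : b • γ₂ ≤ μ := by rw [hμdef]; exact Measure.le_add_left le_rfl
  have hac1 : a • γ₁ ≪ μ := Measure.absolutelyContinuous_of_le hle1
  have hac2 : b • γ₂ ≪ μ := Measure.absolutelyContinuous_of_le hle2
  have hwf : μ.withDensity f = a • γ₁ := Measure.withDensity_rnDeriv_eq _ _ hac1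
  have hwg : μ.withDensity g = b • γ₂ := Measure.withDensity_rnDeriv_eq _ _ hac2
  have hfg : ∀ᵐ w ∂μ, f w + g w = 1 := by
    have h1 := Measure.rnDeriv_add (a • γ₁) (b • γ₂) μ
    have h2 := Measure.rnDeriv_self μ
    rw [← hμdef] at h1
    filter_upwards [h1, h2] with w hw1 hw2
    rw [← hfdef, ← hgdef] at hw1
    calc f w + g w = (f + g) w := rfl
    _ = μ.rnDeriv μ w := hw1.symm
    _ = 1 := hw2
  set f' : W₁ → ℝ≥0∞ := fun w => min (f w) 1 with hf'def
  have hf'm : Measurable f' := hfm.min measurable_const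
  have hf'le : ∀ w, f' w ≤ 1 := fun w => min_le_right _ _
  set g' : W₁ → ℝ≥0∞ := fun w => 1 - f' w with hg'def
  have hg'm : Measurable g' := measurable_const.sub hf'm
  have hg'le : ∀ w, g' w ≤ 1 := fun w => tsub_le_self
  -- a.e. f' = f and g' = g
  have hf'f : ∀ᵐ w ∂μ, f' w = f w ∧ g' w = g w := by
    filter_upwards [hfg] with w hw
    have hfle : f w ≤ 1 := hw ▸ le_self_add
    have h1 : f' w = f w := min_eq_left hfle
    refine ⟨h1, ?_⟩
    show 1 - f' w = g w
    rw [h1, ← hw, ENNReal.add_sub_cancel_left (hfle.trans_lt ENNReal.one_lt_top).ne]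
  -- the combined kernel
  set κ' : Kernel W₁ W₂ :=
    κ.withDensity (fun w _ => f' w) + η.withDensity (fun w _ => g' w) with hκ'def
  haveI : IsFiniteKernel (κ.withDensity fun w _ => f' w) :=
    Kernel.isFiniteKernel_withDensity_of_bounded κ (B := 1) ENNReal.one_ne_top (fun w _ => hf'le w)
  haveI : IsFiniteKernel (η.withDensity fun w _ => g' w) :=
    Kernel.isFiniteKernel_withDensity_of_bounded η (B := 1) ENNReal.one_ne_top (fun w _ => hg'le w)
  have hκ'app : ∀ w, κ' w = f' w • κ w + g' w • η w := by
    intro w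
    rw [hκ'def, Kernel.add_apply,
      Kernel.withDensity_apply _ (show Measurable (Function.uncurry fun w (_ : W₂) => f' w)
        from hf'm.comp measurable_fst),
      Kernel.withDensity_apply _ (show Measurable (Function.uncurry fun w (_ : W₂) => g' w)
        from hg'm.comp measurable_fst), withDensity_const, withDensity_const]
  haveI hκ'M : IsMarkovKernel κ' := by
    constructor
    intro w
    constructor
    rw [hκ'app w]
    simp only [Measure.add_apply, Measure.smul_apply, measure_univ, smul_eq_mul, mul_one]
    exact add_tsub_cancel_of_le (hf'le w)
  -- a.e. membership of conditionals
  set N : Set W₁ := toMeasurable γ₁ {w | κ w ∉ Γfam w} with hNdef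
  have hNm : MeasurableSet N := measurableSet_toMeasurable _ _
  have hN0 : γ₁ N = 0 := by
    rw [hNdef, measure_toMeasurable]
    exact hκae
  have hNsub : ∀ w, w ∉ N → κ w ∈ Γfam w := by
    intro w hw
    by_contra h
    exact hw (subset_toMeasurable _ _ h)
  set M : Set W₁ := toMeasurable γ₂ {w | η w ∉ Γfam w} with hMdef
  have hMm : MeasurableSet M := measurableSet_toMeasurable _ _
  have hM0 : γ₂ M = 0 := by
    rw [hMdef, measure_toMeasurable]
    exact hηae
  have hMsub : ∀ w, w ∉ M → η w ∈ Γfam w := by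
    intro w hw
    by_contra h
    exact hw (subset_toMeasurable _ _ h)
  have hfN : ∀ᵐ w ∂μ, w ∈ N → f w = 0 := by
    have hint : ∫⁻ w in N, f w ∂μ = 0 := by
      rw [← withDensity_apply f hNm, hwf, Measure.smul_apply, hN0]
      simp
    rw [← ae_restrict_iff' hNm]
    filter_upwards [(lintegral_eq_zero_iff hfm).mp hint] with x hx using hx
  have hgM : ∀ᵐ w ∂μ, w ∈ M → g w = 0 := by
    have hint : ∫⁻ w in M, g w ∂μ = 0 := by
      rw [← withDensity_apply g hMm, hwg, Measure.smul_apply, hM0]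
      simp
    rw [← ae_restrict_iff' hMm]
    filter_upwards [(lintegral_eq_zero_iff hgm).mp hint] with x hx using hx
  have hκ'ae : ∀ᵐ w ∂μ, κ' w ∈ Γfam w := by
    filter_upwards [hfg, hf'f, hfN, hgM] with w hw hw' hwN hwM
    by_cases hN' : w ∈ N
    · have hf0 : f w = 0 := hwN hN'
      have hg1 : g w = 1 := by rw [← hw, hf0, zero_add]
      have hM' : w ∉ M := fun h => by simp [hwM h] at hg1
      have hf'0 : f' w = 0 := hw'.1.trans hf0
      have hg'1 : g' w = 1 := hw'.2.trans hg1
      rw [hκ'app w, hf'0, hg'1, zero_smul, one_smul, zero_add]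
      exact hMsub w hM'
    · have hκmem : κ w ∈ Γfam w := hNsub w hN'
      by_cases hM' : w ∈ M
      · have hg0 : g w = 0 := hwM hM'
        have hf1 : f w = 1 := by rw [← hw, hg0, add_zero]
        have hf'1 : f' w = 1 := hw'.1.trans hf1
        have hg'0 : g' w = 0 := hw'.2.trans hg0
        rw [hκ'app w, hf'1, hg'0, zero_smul, one_smul, add_zero]
        exact hκmem
      · have hηmem : η w ∈ Γfam w := hMsub w hM'
        rw [hκ'app w]
        exact hΓfamconv w _ hκmem _ hηmem (f' w) (g' w)
          (add_tsub_cancel_of_le (hf'le w))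
  refine ⟨μ, hΓ₁conv γ₁ hγ₁ γ₂ hγ₂ a b hab, κ', hκ'M, hκ'ae, ?_⟩
  have hwf' : μ.withDensity f' = a • γ₁ := by
    rw [withDensity_congr_ae (g := f) (by filter_upwards [hf'f] with w hw using hw.1), hwf]
  have hwg' : μ.withDensity g' = b • γ₂ := by
    rw [withDensity_congr_ae (g := g) (by filter_upwards [hf'f] with w hw using hw.2), hwg]
  rw [hκ'def, Measure.compProd_add_right,
    compProd_withDensity_fst μ κ hf'm hf'le,
    compProd_withDensity_fst μ η hg'm hg'le, hwf', hwg',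
    Measure.compProd_smul_left, Measure.compProd_smul_left]
end

section
/- Let Ξ = closure of the convex hull of {f_ℓ / 2^ℓ : ℓ ∈ ℕ} in the supremum norm, where each f_ℓ : Z → [0,1]. Then for every L ∈ ℕ, Ξ admits a 2^{-L}-cover (in sup norm) of cardinality at most (L+1)^{L+1} · 2^{L(L+1)/2}, and consequently the metric entropy integral ∫₀^∞ √(log N(ε, Ξ, ‖·‖_∞)) dε is finite. -/
/-!
With `ψ n = f (n + 1) / 2 ^ (n + 1)`, so that `|ψ n| ≤ 2^-(n+1)`, an element of the convex hull
is `∑ aₙ ψ n` for a probability vector `a`. Rounding each of the first `L + 1` coefficients to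
the grid `{0, 1/M, …, (M-1)/M}` with `M = (L+1) 2^(L-n)` costs at most
`(M 2^(n+1))⁻¹ = ((L+1) 2^(L+1))⁻¹`, so `2^-(L+1)` in total; dropping the remaining
coefficients costs at most `2^-(L+2)`, and passing to the closure another `2^-(L+2)`.
There are `∏ M = (L+1)^(L+1) 2^(L(L+1)/2) ≤ 4^((L+1)^2)` grid points, so at scale `ε`, with
`L = ⌈log₂ ε⁻¹⌉`, the entropy `√(log N(ε))` is `O(1 + |log ε|)`, integrable near `0`, and it
vanishes for `ε ≥ 1`.
-/

open MeasureTheory Set Real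

lemma image_setOf_one_le_eq_range {α : Type*} (φ : ℕ → α) :
    φ '' {ℓ | 1 ≤ ℓ} = range fun n => φ (n + 1) := by
  rw [show {ℓ : ℕ | 1 ≤ ℓ} = range Nat.succ from Nat.range_succ.symm, ← range_comp]
  rfl

lemma exists_weights_of_mem_convexHull_range {E : Type*} [AddCommGroup E] [Module ℝ E]
    {ψ : ℕ → E} {h : E} (hh : h ∈ convexHull ℝ (range ψ)) (N₀ : ℕ) :
    ∃ N ≥ N₀, ∃ a : ℕ → ℝ, (∀ n, 0 ≤ a n) ∧ ∑ n ∈ Finset.range N, a n = 1 ∧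
      ∑ n ∈ Finset.range N, a n • ψ n = h := by
  classical
  obtain ⟨ι, _, w, p, hw₀, hw₁, hp, rfl⟩ := mem_convexHull_iff_exists_fintype.mp hh
  choose idx hidx using hp
  set N := max N₀ (Finset.univ.sup idx + 1)
  have hmaps : ∀ i ∈ (Finset.univ : Finset ι), idx i ∈ Finset.range N := fun i _ =>
    Finset.mem_range.mpr <| (Nat.lt_succ_of_le (Finset.le_sup (Finset.mem_univ i))).trans_le
      (le_max_right _ _)
  refine ⟨N, le_max_left _ _, fun n => ∑ i with idx i = n, w i,
    fun n => Finset.sum_nonneg fun i _ => hw₀ i, ?_, ?_⟩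
  · rw [Finset.sum_fiberwise_of_maps_to hmaps, hw₁]
  · simp_rw [Finset.sum_smul]
    rw [← Finset.sum_fiberwise_of_maps_to hmaps]
    refine Finset.sum_congr rfl fun n _ => Finset.sum_congr rfl fun i hi => ?_
    rw [← hidx, (Finset.mem_filter.mp hi).2]

lemma exists_fin_abs_sub_div_le {x : ℝ} (hx₀ : 0 ≤ x) (hx₁ : x ≤ 1) {M : ℕ} (hM : 0 < M) :
    ∃ m : Fin M, |x - (m : ℕ) / M| ≤ (M : ℝ)⁻¹ := by
  set m := min ⌊x * M⌋₊ (M - 1)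
  have hM' : (0 : ℝ) < M := Nat.cast_pos.mpr hM
  have hle : (m : ℝ) ≤ x * M :=
    (Nat.cast_le.mpr (min_le_left _ _)).trans (Nat.floor_le (by positivity))
  have hge : x * M - 1 ≤ m := by
    rw [Nat.cast_min, Nat.cast_pred hM]
    exact le_min (Nat.sub_one_lt_floor _).le (by nlinarith)
  refine ⟨⟨m, (min_le_right _ _).trans_lt (Nat.sub_one_lt hM.ne')⟩, ?_⟩
  rw [show x - (m : ℝ) / M = (x * M - m) * (M : ℝ)⁻¹ by field_simp, abs_mul, abs_inv,
    abs_of_pos hM']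
  exact mul_le_of_le_one_left (by positivity) (abs_le.mpr ⟨by linarith, by linarith⟩)

lemma abs_sum_Ico_mul_le {a u : ℕ → ℝ} (ha : ∀ n, 0 ≤ a n)
    (hu : ∀ n, |u n| ≤ (2 ^ (n + 1))⁻¹) (K N : ℕ) :
    |∑ n ∈ Finset.Ico K N, a n * u n| ≤ (∑ n ∈ Finset.Ico K N, a n) * (2 ^ (K + 1))⁻¹ := by
  rw [Finset.sum_mul]
  refine (Finset.abs_sum_le_sum_abs _ _).trans (Finset.sum_le_sum fun n hn => ?_)
  rw [abs_mul, abs_of_nonneg (ha n)]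
  refine mul_le_mul_of_nonneg_left ((hu n).trans ?_) (ha n)
  exact inv_anti₀ (by positivity)
    (pow_le_pow_right₀ one_le_two (by linarith [(Finset.mem_Ico.mp hn).1]))

def gridSize (L n : ℕ) : ℕ := (L + 1) * 2 ^ (L - n)

lemma gridSize_pos (L n : ℕ) : 0 < gridSize L n := by unfold gridSize; positivity

lemma gridSize_mul_two_pow {L n : ℕ} (hn : n ≤ L) :
    gridSize L n * 2 ^ (n + 1) = (L + 1) * 2 ^ (L + 1) := by
  rw [gridSize, mul_assoc, ← pow_add]
  congr 2
  omega

lemma abs_sum_mul_le_of_abs_le_inv_gridSize {L : ℕ} {b : Fin (L + 1) → ℝ} {u : ℕ → ℝ}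
    (hb : ∀ n, |b n| ≤ (gridSize L n : ℝ)⁻¹) (hu : ∀ n, |u n| ≤ (2 ^ (n + 1))⁻¹) :
    |∑ n, b n * u n| ≤ (2 ^ (L + 1))⁻¹ := by
  calc |∑ n, b n * u n| ≤ ∑ n : Fin (L + 1), ((((L + 1) * 2 ^ (L + 1) : ℕ)) : ℝ)⁻¹ := by
        refine (Finset.abs_sum_le_sum_abs _ _).trans (Finset.sum_le_sum fun n _ => ?_)
        rw [abs_mul, ← gridSize_mul_two_pow (Nat.lt_succ_iff.mp n.isLt), Nat.cast_mul,
          Nat.cast_pow, Nat.cast_ofNat, mul_inv]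
        exact mul_le_mul (hb n) (hu n) (abs_nonneg _) (by positivity)
    _ = (2 ^ (L + 1))⁻¹ := by
        rw [Finset.sum_const, Finset.card_univ, Fintype.card_fin, nsmul_eq_mul]
        push_cast
        field_simp

def coverCardBound (L : ℕ) : ℕ := (L + 1) ^ (L + 1) * 2 ^ (L * (L + 1) / 2)

lemma card_gridIndex (L : ℕ) :
    Fintype.card (∀ n : Fin (L + 1), Fin (gridSize L n)) = coverCardBound L := by
  rw [Fintype.card_pi]
  simp only [Fintype.card_fin]
  simp only [gridSize, Finset.prod_mul_distrib, Fin.prod_const, Finset.prod_pow_eq_pow_sum,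
    coverCardBound]
  have hreflect : ∑ n ∈ Finset.range (L + 1), (L - n) = ∑ n ∈ Finset.range (L + 1), n := by
    simpa using Finset.sum_range_reflect (fun n => n) (L + 1)
  rw [Fin.sum_univ_eq_sum_range (fun n => L - n), hreflect, Finset.sum_range_id,
    Nat.add_sub_cancel, mul_comm (L + 1) L]

section
variable {Z : Type*} (ψ : ℕ → Z → ℝ)

noncomputable def gridPoint (L : ℕ) (c : ∀ n : Fin (L + 1), Fin (gridSize L n)) : Z → ℝ :=
  fun z => ∑ n, ((c n : ℕ) / gridSize L n : ℝ) * ψ n z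

variable {ψ}

lemma exists_gridPoint_near_of_mem_convexHull (hψ : ∀ n z, |ψ n z| ≤ (2 ^ (n + 1))⁻¹)
    {h : Z → ℝ} (hh : h ∈ convexHull ℝ (range ψ)) (L : ℕ) :
    ∃ c, ∀ z, |h z - gridPoint ψ L c z| ≤ (2 ^ (L + 1))⁻¹ + (2 ^ (L + 2))⁻¹ := by
  obtain ⟨N, hN, a, ha₀, ha₁, rfl⟩ := exists_weights_of_mem_convexHull_range hh (L + 1)
  have ha_le_one : ∀ n < N, a n ≤ 1 := fun n hn =>
    ha₁ ▸ Finset.single_le_sum (fun i _ => ha₀ i) (Finset.mem_range.mpr hn)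
  choose c hc using fun n : Fin (L + 1) =>
    exists_fin_abs_sub_div_le (ha₀ n) (ha_le_one n (by omega)) (gridSize_pos L n)
  refine ⟨c, fun z => ?_⟩
  have hsplit : (∑ n ∈ Finset.range N, a n • ψ n) z - gridPoint ψ L c z =
      ∑ n : Fin (L + 1), (a n - (c n : ℕ) / gridSize L n) * ψ n z +
        ∑ n ∈ Finset.Ico (L + 1) N, a n * ψ n z := by
    simp only [Finset.sum_apply, Pi.smul_apply, smul_eq_mul, gridPoint, sub_mul,
      Finset.sum_sub_distrib, ← Finset.sum_range_add_sum_Ico _ hN,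
      Fin.sum_univ_eq_sum_range (fun n => a n * ψ n z)]
    ring
  have htail : ∑ n ∈ Finset.Ico (L + 1) N, a n ≤ 1 :=
    ha₁ ▸ Finset.sum_le_sum_of_subset_of_nonneg
      (Nat.Ico_zero_eq_range N ▸ Finset.Ico_subset_Ico_left (Nat.zero_le _)) fun n _ _ => ha₀ n
  rw [hsplit]
  refine (abs_add_le _ _).trans (add_le_add (abs_sum_mul_le_of_abs_le_inv_gridSize hc (hψ · z)) ?_)
  exact (abs_sum_Ico_mul_le ha₀ (hψ · z) _ _).trans (mul_le_of_le_one_left (by positivity) htail)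

lemma exists_finset_cover_of_forall_near_convexHull (hψ : ∀ n z, |ψ n z| ≤ (2 ^ (n + 1))⁻¹)
    (L : ℕ) : ∃ T : Finset (Z → ℝ), T.card ≤ coverCardBound L ∧
      ∀ g : Z → ℝ, (∀ ε > 0, ∃ h ∈ convexHull ℝ (range ψ), ∀ z, |g z - h z| ≤ ε) →
        ∃ h ∈ T, ∀ z, |g z - h z| ≤ (2 ^ L)⁻¹ := by
  classical
  refine ⟨Finset.univ.image (gridPoint ψ L),
    Finset.card_image_le.trans_eq (card_gridIndex L), fun g hg => ?_⟩
  obtain ⟨h, hh, hgh⟩ := hg (2 ^ (L + 2))⁻¹ (by positivity)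
  obtain ⟨c, hc⟩ := exists_gridPoint_near_of_mem_convexHull hψ hh L
  refine ⟨_, Finset.mem_image_of_mem _ (Finset.mem_univ c), fun z => ?_⟩
  calc |g z - gridPoint ψ L c z| ≤ |g z - h z| + |h z - gridPoint ψ L c z| := abs_sub_le _ _ _
    _ ≤ (2 ^ (L + 2))⁻¹ + ((2 ^ (L + 1))⁻¹ + (2 ^ (L + 2))⁻¹) := add_le_add (hgh z) (hc z)
    _ = (2 ^ L)⁻¹ := by rw [pow_succ, pow_succ]; field_simp; ring

end

noncomputable def coverScale (ε : ℝ) : ℕ := ⌈logb 2 ε⁻¹⌉₊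

lemma inv_two_pow_coverScale_le {ε : ℝ} (hε : 0 < ε) : ((2 : ℝ) ^ coverScale ε)⁻¹ ≤ ε := by
  rw [inv_le_comm₀ (by positivity) hε]
  calc ε⁻¹ = 2 ^ logb 2 ε⁻¹ := (rpow_logb two_pos (by norm_num) (inv_pos.2 hε)).symm
    _ ≤ 2 ^ (coverScale ε : ℝ) := rpow_le_rpow_of_exponent_le one_le_two (Nat.le_ceil _)
    _ = 2 ^ coverScale ε := rpow_natCast _ _

lemma coverScale_eq_zero {ε : ℝ} (hε : 1 ≤ ε) : coverScale ε = 0 :=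
  Nat.ceil_eq_zero.mpr (logb_nonpos one_lt_two (by positivity) (inv_le_one_of_one_le₀ hε))

lemma coverScale_le_logb_inv_add_one {ε : ℝ} (hε₀ : 0 < ε) (hε₁ : ε ≤ 1) :
    (coverScale ε : ℝ) ≤ logb 2 ε⁻¹ + 1 :=
  (Nat.ceil_lt_add_one (logb_nonneg one_lt_two (one_le_inv₀ hε₀ |>.mpr hε₁))).le

lemma measurable_coverScale : Measurable coverScale :=
  Nat.measurable_ceil.comp ((measurable_log.comp measurable_inv).div_const _)

lemma coverCardBound_le_four_pow (L : ℕ) : coverCardBound L ≤ 4 ^ (L + 1) ^ 2 := by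
  calc coverCardBound L ≤ (2 ^ (L + 1)) ^ (L + 1) * 2 ^ (L + 1) ^ 2 :=
        Nat.mul_le_mul (Nat.pow_le_pow_left Nat.lt_two_pow_self.le _)
          (Nat.pow_le_pow_right two_pos ((Nat.div_le_self _ _).trans (by nlinarith)))
    _ = 4 ^ (L + 1) ^ 2 := by rw [← pow_mul, ← sq, ← mul_pow]; rfl

lemma sqrt_log_coverCardBound_le (L : ℕ) : √(log (coverCardBound L)) ≤ 2 * (L + 1) := by
  have hlog4 : log 4 ≤ 4 := by linarith [log_le_sub_one_of_pos (by norm_num : (0 : ℝ) < 4)]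
  calc √(log (coverCardBound L)) ≤ √(log ((4 : ℝ) ^ (L + 1) ^ 2)) := by
        gcongr
        · exact Nat.cast_pos.mpr (by unfold coverCardBound; positivity)
        · exact_mod_cast coverCardBound_le_four_pow L
    _ ≤ √((2 * (L + 1)) ^ 2) := by
        gcongr
        rw [log_pow]
        push_cast
        nlinarith
    _ = 2 * (L + 1) := sqrt_sq (by positivity)

lemma integrableOn_sqrt_log_coverCardBound_coverScale :
    IntegrableOn (fun ε => √(log (coverCardBound (coverScale ε)))) (Ioi 0) := by
  have hmeas : Measurable fun ε => √(log (coverCardBound (coverScale ε))) :=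
    (measurable_from_top (f := fun L => √(log (coverCardBound L)))).comp measurable_coverScale
  have hlog : IntegrableOn (fun ε => 4 - 2 / log 2 * log ε) (Ioc 0 1) :=
    (integrableOn_const measure_Ioc_lt_top.ne).sub <| Integrable.const_mul
      ((intervalIntegrable_iff_integrableOn_Ioc_of_le zero_le_one).mp
        intervalIntegral.intervalIntegrable_log') _
  have hsmall : IntegrableOn (fun ε => √(log (coverCardBound (coverScale ε)))) (Ioc 0 1) := by
    refine hlog.mono' hmeas.aestronglyMeasurable.restrict ?_
    filter_upwards [ae_restrict_mem measurableSet_Ioc] with ε ⟨hε₀, hε₁⟩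
    rw [norm_of_nonneg (sqrt_nonneg _)]
    have hscale := coverScale_le_logb_inv_add_one hε₀ hε₁
    rw [logb_inv, logb] at hscale
    have : 2 / log 2 * log ε = 2 * (log ε / log 2) := by ring
    exact (sqrt_log_coverCardBound_le _).trans (by linarith)
  have hlarge : IntegrableOn (fun ε => √(log (coverCardBound (coverScale ε)))) (Ioi 1) := by
    refine integrableOn_zero.congr_fun (fun ε hε => ?_) measurableSet_Ioi
    simp [coverScale_eq_zero hε.le, coverCardBound]
  rw [← Ioc_union_Ioi_eq_Ioi zero_le_one]
  exact hsmall.union hlarge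

/-- Entropy bound for the sup-norm closed convex hull `Ξ` of the scaled family
`{f_ℓ / 2^ℓ : ℓ ≥ 1}` with `f_ℓ : Z → [0,1]`: for every `L`, `Ξ` admits a `2^{-L}`-cover
(in sup norm) of cardinality at most `(L+1)^{L+1} · 2^{L(L+1)/2}`, and consequently the
metric entropy integral `∫₀^∞ √(log N(ε, Ξ, ‖·‖_∞)) dε` is finite. -/
theorem entropy_bound_convex_hull {Z : Type*} (f : ℕ → Z → ℝ)
    (hf : ∀ ℓ z, f ℓ z ∈ Set.Icc (0 : ℝ) 1)
    (Ξ : Set (Z → ℝ))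
    (hΞ : Ξ = {g : Z → ℝ | ∀ ε > 0,
      ∃ h ∈ convexHull ℝ ((fun ℓ : ℕ => fun z => f ℓ z / 2 ^ ℓ) '' {ℓ : ℕ | 1 ≤ ℓ}),
        ∀ z, |g z - h z| ≤ ε}) :
    (∀ L : ℕ, ∃ T : Finset (Z → ℝ),
        T.card ≤ (L + 1) ^ (L + 1) * 2 ^ (L * (L + 1) / 2) ∧
        ∀ g ∈ Ξ, ∃ h ∈ T, ∀ z, |g z - h z| ≤ ((2 : ℝ) ^ L)⁻¹) ∧
      ∃ Nfun : ℝ → ℕ,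
        (∀ ε > 0, ∃ T : Finset (Z → ℝ), T.card ≤ Nfun ε ∧
          ∀ g ∈ Ξ, ∃ h ∈ T, ∀ z, |g z - h z| ≤ ε) ∧
        IntegrableOn (fun ε => Real.sqrt (Real.log (Nfun ε))) (Set.Ioi (0 : ℝ)) := by
  have hψ : ∀ n z, |f (n + 1) z / 2 ^ (n + 1)| ≤ (2 ^ (n + 1))⁻¹ := fun n z => by
    rw [abs_of_nonneg (div_nonneg (hf _ z).1 (by positivity)), div_eq_mul_inv]
    exact mul_le_of_le_one_left (by positivity) (hf _ z).2
  have hcover := exists_finset_cover_of_forall_near_convexHull hψ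
  rw [image_setOf_one_le_eq_range] at hΞ
  subst hΞ
  refine ⟨hcover, fun ε => coverCardBound (coverScale ε), fun ε hε => ?_,
    integrableOn_sqrt_log_coverCardBound_coverScale⟩
  obtain ⟨T, hT, hcov⟩ := hcover (coverScale ε)
  refine ⟨T, hT, fun g hg => ?_⟩
  obtain ⟨h, hT, hgh⟩ := hcov g hg
  exact ⟨h, hT, fun z => (hgh z).trans (inv_two_pow_coverScale_le hε)⟩
end
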